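/- Let P be a convex subset of a real affine space, W a group acting on the ambient affine space, and for each x ∈ P let W(x) be a subgroup fixing x, such that: for every z on a line segment l ⊆ P and points u ∈ l sufficiently close to z, one has W(u)_l = W(z)_l, where W(z)_l = {w ∈ W(z) : w fixes l pointwise}. Then for all x, y ∈ P: W(x)_y = W(y)_x, where W(x)_y is the stabilizer of y in W(x). -/
import Mathlib

/-- An affine equivalence fixing the endpoints of a segment fixes the whole segment. -/
lemma affine_fix_segment
    {V : Type*} [NormedAddCommGroup V] [NormedSpace ℝ V]
    (w : V ≃ᵃ[ℝ] V) {x y : V} (hx : w x = x) (hy : w y = y) :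
    ∀ v ∈ segment ℝ x y, w v = v := by
  intro v hv
  rw [segment_eq_image_lineMap] at hv
  obtain ⟨t, _, rfl⟩ := hv
  have h := (w : V →ᵃ[ℝ] V).apply_lineMap x y t
  rw [show w ((AffineMap.lineMap x y) t) = (AffineMap.lineMap (w x) (w y)) t from h, hx, hy]

theorem local_stabilizers_symmetric
    {V : Type*} [NormedAddCommGroup V] [NormedSpace ℝ V]
    (P : Set V) (hP : Convex ℝ P)
    (Wfam : V → Subgroup (V ≃ᵃ[ℝ] V))
    (hfix : ∀ x ∈ P, ∀ w ∈ Wfam x, w x = x)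
    (hloc : ∀ x ∈ P, ∀ y ∈ P, ∀ z ∈ segment ℝ x y, ∃ ε > (0:ℝ),
      ∀ u ∈ segment ℝ x y, ‖u - z‖ < ε →
        {w : V ≃ᵃ[ℝ] V | w ∈ Wfam u ∧ ∀ v ∈ segment ℝ x y, w v = v} =
          {w : V ≃ᵃ[ℝ] V | w ∈ Wfam z ∧ ∀ v ∈ segment ℝ x y, w v = v}) :
    ∀ x ∈ P, ∀ y ∈ P,
      {w : V ≃ᵃ[ℝ] V | w ∈ Wfam x ∧ w y = y} =
        {w : V ≃ᵃ[ℝ] V | w ∈ Wfam y ∧ w x = x} := by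
  intro x hx y hy
  set F : V → Set (V ≃ᵃ[ℝ] V) :=
    fun z => {w : V ≃ᵃ[ℝ] V | w ∈ Wfam z ∧ ∀ v ∈ segment ℝ x y, w v = v} with hF
  choose ε hεpos hε using fun z hz => hloc x hx y hy z hz
  -- F is constant on the segment
  have hFconst : F y = F x := by
    by_contra hne
    set U : Set V := ⋃ (z : V) (hz : z ∈ segment ℝ x y) (_ : F z = F x),
      Metric.ball z (ε z hz) with hU
    set U' : Set V := ⋃ (z : V) (hz : z ∈ segment ℝ x y) (_ : F z ≠ F x),
      Metric.ball z (ε z hz) with hU'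
    have hopenU : IsOpen U := isOpen_iUnion fun z => isOpen_iUnion fun hz =>
      isOpen_iUnion fun _ => Metric.isOpen_ball
    have hopenU' : IsOpen U' := isOpen_iUnion fun z => isOpen_iUnion fun hz =>
      isOpen_iUnion fun _ => Metric.isOpen_ball
    have hcover : segment ℝ x y ⊆ U ∪ U' := by
      intro z hz
      by_cases h : F z = F x
      · exact Or.inl (Set.mem_iUnion.2 ⟨z, Set.mem_iUnion.2 ⟨hz, Set.mem_iUnion.2
          ⟨h, Metric.mem_ball_self (hεpos z hz)⟩⟩⟩)
      · exact Or.inr (Set.mem_iUnion.2 ⟨z, Set.mem_iUnion.2 ⟨hz, Set.mem_iUnion.2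
          ⟨h, Metric.mem_ball_self (hεpos z hz)⟩⟩⟩)
    have hUsub : ∀ u ∈ segment ℝ x y, u ∈ U → F u = F x := by
      intro u hu huU
      simp only [hU, Set.mem_iUnion] at huU
      obtain ⟨z, hz, h, hball⟩ := huU
      rw [Metric.mem_ball, dist_eq_norm] at hball
      exact ((hε z hz u hu hball : F u = F z)).trans h
    have hU'sub : ∀ u ∈ segment ℝ x y, u ∈ U' → F u ≠ F x := by
      intro u hu huU
      simp only [hU', Set.mem_iUnion] at huU
      obtain ⟨z, hz, h, hball⟩ := huU
      rw [Metric.mem_ball, dist_eq_norm] at hball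
      exact fun hc => h (((hε z hz u hu hball : F u = F z)).symm.trans hc)
    have hconn := (convex_segment x y).isPreconnected
    obtain ⟨p, hpseg, hpU, hpU'⟩ := hconn U U' hopenU hopenU' hcover
      ⟨x, left_mem_segment ℝ x y, Set.mem_iUnion.2 ⟨x, Set.mem_iUnion.2
        ⟨left_mem_segment ℝ x y, Set.mem_iUnion.2 ⟨rfl,
          Metric.mem_ball_self (hεpos x (left_mem_segment ℝ x y))⟩⟩⟩⟩
      ⟨y, right_mem_segment ℝ x y, Set.mem_iUnion.2 ⟨y, Set.mem_iUnion.2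
        ⟨right_mem_segment ℝ x y, Set.mem_iUnion.2 ⟨hne,
          Metric.mem_ball_self (hεpos y (right_mem_segment ℝ x y))⟩⟩⟩⟩
    exact hU'sub p hpseg hpU' (hUsub p hpseg hpU)
  ext w
  simp only [Set.mem_setOf_eq]
  constructor
  · rintro ⟨hwx, hwy⟩
    have hwxx : w x = x := hfix x hx w hwx
    have hseg : ∀ v ∈ segment ℝ x y, w v = v := affine_fix_segment w hwxx hwy
    have hwFx : w ∈ F x := ⟨hwx, hseg⟩
    rw [← hFconst] at hwFx
    exact ⟨hwFx.1, hwxx⟩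
  · rintro ⟨hwy, hwx⟩
    have hwyy : w y = y := hfix y hy w hwy
    have hseg : ∀ v ∈ segment ℝ x y, w v = v := affine_fix_segment w hwx hwyy
    have hwFy : w ∈ F y := ⟨hwy, hseg⟩
    rw [hFconst] at hwFy
    exact ⟨hwFy.1, hwyy⟩
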